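/- Let d ≥ 1, let H be a d×d real symmetric matrix with 0 ⪯ H ⪯ βI for some β > 0, let δ ∈ (0, 1/2], let η ∈ (0, 1/(8β)], and let v ∈ [0, δ]. Then for every λ ∈ ℂ with λ ≠ 0 such that λ + δ − 1 is an eigenvalue of the d×d complex matrix −vI − (η(λ−1)/λ²)H + (v/λ)I, it holds that |λ| < 1 − δ/4. -/

import Mathlib

open Matrix ComplexOrder

noncomputable section

private lemma quad_eq' (d : ℕ) (M : Matrix (Fin d) (Fin d) ℝ) (x : Fin d → ℂ) :
    dotProduct (star x) ((M.map (Complex.ofReal ·)) *ᵥ x)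
      = Complex.ofReal ((fun i => (x i).re) ⬝ᵥ (M *ᵥ fun i => (x i).re)
          + (fun i => (x i).im) ⬝ᵥ (M *ᵥ fun i => (x i).im))
        + Complex.I * Complex.ofReal ((fun i => (x i).re) ⬝ᵥ (M *ᵥ fun i => (x i).im)
          - (fun i => (x i).im) ⬝ᵥ (M *ᵥ fun i => (x i).re)) := by
  apply Complex.ext
  · simp only [dotProduct, mulVec, Matrix.map_apply, Finset.mul_sum, Pi.star_apply,
      Complex.re_sum, Complex.im_sum, Complex.add_re, Complex.add_im, Complex.mul_re,
      Complex.mul_im, Complex.ofReal_re, Complex.ofReal_im, Complex.I_re, Complex.I_im,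
      Complex.star_def, Complex.conj_re, Complex.conj_im, Complex.sub_re, Complex.sub_im,
      zero_mul, one_mul, zero_add, mul_zero, sub_zero, add_zero]
    rw [← Finset.sum_add_distrib]
    apply Finset.sum_congr rfl; intro i _
    rw [← Finset.sum_add_distrib]
    apply Finset.sum_congr rfl; intro j _; ring
  · simp only [dotProduct, mulVec, Matrix.map_apply, Finset.mul_sum, Pi.star_apply,
      Complex.re_sum, Complex.im_sum, Complex.add_re, Complex.add_im, Complex.mul_re,
      Complex.mul_im, Complex.ofReal_re, Complex.ofReal_im, Complex.I_re, Complex.I_im,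
      Complex.star_def, Complex.conj_re, Complex.conj_im, Complex.sub_re, Complex.sub_im,
      zero_mul, one_mul, zero_add, mul_zero, sub_zero, add_zero]
    rw [← Finset.sum_sub_distrib]
    apply Finset.sum_congr rfl; intro i _
    rw [← Finset.sum_sub_distrib]
    apply Finset.sum_congr rfl; intro j _; ring

private lemma psd_map' (d : ℕ) (M : Matrix (Fin d) (Fin d) ℝ) (hM : M.PosSemidef) :
    (M.map (Complex.ofReal ·)).PosSemidef := by
  have hsym : ∀ p q : Fin d → ℝ, p ⬝ᵥ (M *ᵥ q) = q ⬝ᵥ (M *ᵥ p) := by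
    intro p q
    simp only [dotProduct, mulVec, Finset.mul_sum]
    rw [Finset.sum_comm]
    apply Finset.sum_congr rfl; intro i _
    apply Finset.sum_congr rfl; intro j _
    have : M i j = M j i := by
      conv_lhs => rw [← hM.1]
      simp [conjTranspose_apply]
    rw [this]; ring
  refine Matrix.PosSemidef.of_dotProduct_mulVec_nonneg ?_ ?_
  · exact hM.1.map _ (fun r => by simp [Complex.conj_ofReal])
  · intro x
    rw [quad_eq' d M x, hsym (fun i => (x i).re) (fun i => (x i).im)]
    simp only [sub_self, Complex.ofReal_zero, mul_zero, add_zero]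
    rw [Complex.zero_le_real]
    have h1 := hM.dotProduct_mulVec_nonneg (fun i => (x i).re)
    have h2 := hM.dotProduct_mulVec_nonneg (fun i => (x i).im)
    simp only [star_trivial] at h1 h2
    exact add_nonneg h1 h2

set_option maxHeartbeats 1000000 in
private lemma keyF' (δ v a x ρ : ℝ) (hδ0 : 0 < δ) (hδ1 : δ ≤ 1/2) (hv0 : 0 ≤ v) (hvδ : v ≤ δ)
    (ha0 : 0 ≤ a) (ha8 : a ≤ 1/8) (hρpos : 0 ≤ ρ) (hx2 : x^2 ≤ ρ) (hρ64 : ρ ≤ 64/49) :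
    0 < 2 + 2*(v*x + a*(2*x^2 - ρ)) - δ
      - (1/2 - δ/16)*(1 + 2*(v*x + a*(2*x^2 - ρ)) + (v^2*ρ + 2*(v*a*(ρ*x)) + a^2*ρ^2)) := by
  have hxl : -(8/7) ≤ x := by nlinarith
  have hxr : x ≤ 8/7 := by nlinarith
  have hρxu : ρ*x ≤ 512/343 := by nlinarith [mul_le_mul_of_nonneg_left hxr hρpos]
  have hρxl : -(512/343) ≤ ρ*x := by nlinarith [mul_le_mul_of_nonneg_left hxl hρpos]
  have f2 : a*ρ ≤ (64/49)*a := by nlinarith [mul_le_mul_of_nonneg_left hρ64 ha0]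
  have f2δ : δ*(a*ρ) ≤ δ*((64/49)*a) := mul_le_mul_of_nonneg_left f2 hδ0.le
  have f3 : v^2*ρ ≤ (64/49)*v^2 := by nlinarith [mul_le_mul_of_nonneg_left hρ64 (sq_nonneg v)]
  have f4 : 0 ≤ δ*(v^2*ρ) := by positivity
  have f5 : v*a*(ρ*x) ≤ (512/343)*(v*a) := by
    nlinarith [mul_le_mul_of_nonneg_left hρxu (mul_nonneg hv0 ha0)]
  have f6 : -(512/343)*(v*a) ≤ v*a*(ρ*x) := by
    nlinarith [mul_le_mul_of_nonneg_left hρxl (mul_nonneg hv0 ha0)]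
  have f6δ : δ*(-(512/343)*(v*a)) ≤ δ*(v*a*(ρ*x)) := mul_le_mul_of_nonneg_left f6 hδ0.le
  have f7 : a^2*ρ^2 ≤ (4096/2401)*a^2 := by
    nlinarith [mul_le_mul_of_nonneg_left (mul_le_mul hρ64 hρ64 hρpos (by norm_num)) (sq_nonneg a)]
  have f8 : 0 ≤ δ*(a^2*ρ^2) := by positivity
  rcases le_or_gt (7*v) (32*a) with hca | hca
  · rcases eq_or_lt_of_le ha0 with ha0' | ha0'
    · have hv00 : v = 0 := by nlinarith
      rw [← ha0', hv00]
      nlinarith [f3, f4, f7, f8, hρpos]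
    · have f1' : -(4/7)*v ≤ v*x + 2*a*x^2 := by
        nlinarith [sq_nonneg (v + 4*a*x), hca, mul_nonneg hv0 ha0]
      have f1δ : δ*(-(4/7)*v) ≤ δ*(v*x + 2*a*x^2) := mul_le_mul_of_nonneg_left f1' hδ0.le
      nlinarith [f1', f1δ, f2, f2δ, f3, f4, f5, f6, f6δ, f7, f8,
        mul_nonneg hv0 ha0, hca, mul_nonneg hδ0.le (mul_nonneg hv0 ha0),
        mul_nonneg hδ0.le hv0, mul_nonneg hδ0.le ha0, mul_nonneg hv0 hv0, mul_nonneg ha0 ha0]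
  · have hfac : 0 ≤ (x + 8/7) * ((v - (32/7)*a) + 2*(a*(x+8/7))) := by
      apply mul_nonneg (by linarith)
      have := mul_nonneg ha0 (by linarith : (0:ℝ) ≤ x + 8/7)
      linarith
    have f1 : -(8/7)*v + (128/49)*a ≤ v*x + 2*a*x^2 := by nlinarith [hfac]
    have f1δ : δ*(-(8/7)*v + (128/49)*a) ≤ δ*(v*x + 2*a*x^2) :=
      mul_le_mul_of_nonneg_left f1 hδ0.le
    nlinarith [f1, f1δ, f2, f2δ, f3, f4, f5, f6, f6δ, f7, f8,
      mul_nonneg hv0 ha0, hca, mul_nonneg hδ0.le (mul_nonneg hv0 ha0),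
      mul_nonneg hδ0.le hv0, mul_nonneg hδ0.le ha0, mul_nonneg hv0 hv0, mul_nonneg ha0 ha0]

set_option maxHeartbeats 1000000 in
private lemma key' (δ v a x y : ℝ) (hδ0 : 0 < δ) (hδ1 : δ ≤ 1/2) (hv0 : 0 ≤ v) (hvδ : v ≤ δ)
    (ha0 : 0 ≤ a) (ha8 : a ≤ 1/8)
    (hρ : (x^2+y^2) * (1-δ/4)^2 ≤ 1) :
    (1 + (v*x + a*(x^2-y^2)) - δ)^2 + (v*y + 2*a*x*y)^2
      < (1-δ/4)^2 * ((1 + (v*x + a*(x^2-y^2)))^2 + (v*y + 2*a*x*y)^2) := by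
  have hρpos : (0:ℝ) ≤ x^2 + y^2 := by positivity
  have h78 : (49:ℝ)/64 ≤ (1-δ/4)^2 := by nlinarith
  have hρ64 : x^2 + y^2 ≤ 64/49 := by nlinarith [mul_le_mul_of_nonneg_left h78 hρpos]
  have hx2 : x^2 ≤ x^2 + y^2 := by nlinarith [sq_nonneg y]
  have hF := keyF' δ v a x (x^2+y^2) hδ0 hδ1 hv0 hvδ ha0 ha8 hρpos hx2 hρ64
  nlinarith [mul_pos hδ0 hF]

set_option maxHeartbeats 1000000 in
/-- Momentum lemma (Section 3.1.2): if `0 ⪯ H ⪯ βI`, `δ ∈ (0, 1/2]`, `0 < η ≤ 1/(8β)` and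
`v ∈ [0, δ]`, then any nonzero `λ ∈ ℂ` such that `λ + δ − 1` is an eigenvalue of
`−vI − (η(λ−1)/λ²)H + (v/λ)I` satisfies `|λ| < 1 − δ/4`. -/
theorem stmt7 (d : ℕ) (hd : 1 ≤ d) (H : Matrix (Fin d) (Fin d) ℝ) (β : ℝ) (hβ : 0 < β)
    (hH : H.PosSemidef) (hHβ : (β • (1 : Matrix (Fin d) (Fin d) ℝ) - H).PosSemidef)
    (δ η : ℝ) (hδ : δ ∈ Set.Ioc (0 : ℝ) (1 / 2)) (hη : η ∈ Set.Ioc (0 : ℝ) (1 / (8 * β)))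
    (v : ℝ) (hv : v ∈ Set.Icc (0 : ℝ) δ)
    (lam : ℂ) (hlam0 : lam ≠ 0)
    (hlam : lam + (δ : ℂ) - 1 ∈ spectrum ℂ
      ((-(v : ℂ)) • (1 : Matrix (Fin d) (Fin d) ℂ)
        - ((η : ℂ) * (lam - 1) / lam ^ 2) • H.map (Complex.ofReal ·)
        + ((v : ℂ) / lam) • (1 : Matrix (Fin d) (Fin d) ℂ))) :
    ‖lam‖ < 1 - δ / 4 := by
  have hA : (H.map (Complex.ofReal ·)).PosSemidef := psd_map' d H hH
  have hAβ : ((β • (1 : Matrix (Fin d) (Fin d) ℝ) - H).map (Complex.ofReal ·)).PosSemidef :=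
    psd_map' d _ hHβ
  -- Step A: extract a real eigenvalue relation
  obtain ⟨h, hh0, hhβ, hrel⟩ : ∃ h : ℝ, 0 ≤ h ∧ h ≤ β ∧
      ((η : ℂ) * (lam - 1) / lam ^ 2) * (h : ℂ) = (v : ℂ)/lam - v - (lam + δ - 1) := by
    set A := H.map (Complex.ofReal ·) with hAdef
    set c : ℂ := (η : ℂ) * (lam - 1) / lam ^ 2 with hc
    set μ : ℂ := lam + δ - 1 with hμ
    rw [spectrum.mem_iff, Matrix.isUnit_iff_isUnit_det, isUnit_iff_ne_zero, not_not,
      ← Matrix.exists_mulVec_eq_zero_iff] at hlam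
    obtain ⟨w, hw0, hw⟩ := hlam
    rw [Algebra.algebraMap_eq_smul_one] at hw
    simp only [sub_mulVec, add_mulVec, smul_mulVec, one_mulVec] at hw
    have hw' : c • (A *ᵥ w) = ((v:ℂ)/lam - v - μ) • w := by
      linear_combination (norm := module) hw
    set Q : ℂ := dotProduct (star w) (A *ᵥ w) with hQ
    set N : ℂ := dotProduct (star w) w with hN
    have hQN : c * Q = ((v:ℂ)/lam - v - μ) * N := by
      have := congrArg (fun y => dotProduct (star w) y) hw'
      simpa [dotProduct_smul, smul_eq_mul] using this
    have hN0 : 0 < N := Matrix.dotProduct_star_self_pos_iff.mpr hw0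
    have hQ0 : 0 ≤ Q := hA.dotProduct_mulVec_nonneg w
    have hQβ : Q ≤ (β:ℂ) * N := by
      have h3 := hAβ.dotProduct_mulVec_nonneg w
      have hmap : ((β • (1 : Matrix (Fin d) (Fin d) ℝ) - H).map (Complex.ofReal ·))
          = (β:ℂ) • (1 : Matrix (Fin d) (Fin d) ℂ) - A := by
        ext i j
        by_cases hij : i = j <;>
          simp [hAdef, Matrix.map_apply, Matrix.sub_apply, Matrix.smul_apply,
            Matrix.one_apply, hij]
      rw [hmap, sub_mulVec, smul_mulVec, one_mulVec] at h3
      rw [dotProduct_sub, dotProduct_smul, smul_eq_mul] at h3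
      exact sub_nonneg.mp h3
    have hNre : 0 < N.re := (Complex.lt_def.mp hN0).1
    have hNim : N.im = 0 := ((Complex.lt_def.mp hN0).2).symm
    have hQre : 0 ≤ Q.re := (Complex.le_def.mp hQ0).1
    have hQim : Q.im = 0 := ((Complex.le_def.mp hQ0).2).symm
    have hQeq : Q = (Q.re : ℂ) := by
      apply Complex.ext <;> simp [hQim]
    have hNeq : N = (N.re : ℂ) := by
      apply Complex.ext <;> simp [hNim]
    refine ⟨Q.re / N.re, div_nonneg hQre hNre.le, ?_, ?_⟩
    · rw [div_le_iff₀ hNre]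
      have := (Complex.le_def.mp hQβ).1
      rw [hNeq] at this
      simpa using this
    · have hQN' : c * (Q.re : ℂ) = ((v:ℂ)/lam - v - μ) * (N.re : ℂ) := by
        rw [← hQeq, ← hNeq]; exact hQN
      have hNne : ((N.re : ℝ) : ℂ) ≠ 0 := by
        exact_mod_cast ne_of_gt (by exact_mod_cast hNre)
      rw [Complex.ofReal_div, ← mul_div_assoc, hQN', mul_div_cancel_right₀ _ hNne]
  -- Step B: the scalar analytic estimate
  obtain ⟨hδ0, hδ1⟩ := hδ
  obtain ⟨hη0, hη1⟩ := hη
  obtain ⟨hv0, hvδ⟩ := hv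
  by_contra hcon
  push_neg at hcon
  set a : ℝ := η * h with hadef
  have ha0 : 0 ≤ a := mul_nonneg hη0.le hh0
  have ha8 : a ≤ 1/8 := by
    have h1 : η * h ≤ η * β := mul_le_mul_of_nonneg_left hhβ hη0.le
    have h2 : η * β ≤ (1/(8*β)) * β := mul_le_mul_of_nonneg_right hη1 hβ.le
    have h3 : (1/(8*β)) * β = 1/8 := by field_simp
    linarith
  set z : ℂ := lam⁻¹ with hzdef
  have hz : lam * z = 1 := mul_inv_cancel₀ hlam0
  set u : ℂ := (v:ℂ)*z + (a:ℂ)*z^2 with hudef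
  have hane : ((a:ℝ):ℂ) = (η:ℂ)*(h:ℂ) := by push_cast [hadef]; ring
  have hpoly : lam^3 + (v:ℂ)*lam^2 + (a:ℂ)*lam
      = lam^2 + (v:ℂ)*lam + (a:ℂ) - (δ:ℂ)*lam^2 := by
    apply mul_left_cancel₀ hlam0
    field_simp at hrel
    rw [hane]
    linear_combination lam * hrel
  have h1 : 1 + u = z * (1 + u - (δ:ℂ)) := by
    apply mul_left_cancel₀ (pow_ne_zero 3 hlam0)
    rw [hudef, hzdef]
    field_simp
    linear_combination hpoly
  have hpos : (0:ℝ) < 1 - δ/4 := by linarith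
  have habs : ‖1+u‖ ≤ (1 - δ/4)⁻¹ * ‖1+u-(δ:ℂ)‖ := by
    conv_lhs => rw [h1]
    rw [norm_mul]
    have hziv : ‖z‖ = ‖lam‖⁻¹ := by rw [hzdef, norm_inv]
    have hzb : ‖z‖ ≤ (1 - δ/4)⁻¹ := by
      rw [hziv]
      exact inv_anti₀ hpos hcon
    exact mul_le_mul_of_nonneg_right hzb (norm_nonneg _)
  have h2 : (1 - δ/4) * ‖1+u‖ ≤ ‖1+u-(δ:ℂ)‖ := by
    have h4 := mul_le_mul_of_nonneg_left habs hpos.le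
    rwa [← mul_assoc, mul_inv_cancel₀ hpos.ne', one_mul] at h4
  have e1 : ‖1+u‖ ^ 2 = (1 + u.re)^2 + u.im^2 := by
    rw [Complex.sq_norm, Complex.normSq_apply]
    simp only [Complex.add_re, Complex.add_im, Complex.one_re, Complex.one_im]
    ring
  have e2 : ‖1+u-(δ:ℂ)‖ ^ 2 = (1 + u.re - δ)^2 + u.im^2 := by
    rw [Complex.sq_norm, Complex.normSq_apply]
    simp only [Complex.add_re, Complex.add_im, Complex.sub_re, Complex.sub_im,
      Complex.one_re, Complex.one_im, Complex.ofReal_re, Complex.ofReal_im]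
    ring
  have hsq : (1 - δ/4)^2 * ((1 + u.re)^2 + u.im^2) ≤ (1 + u.re - δ)^2 + u.im^2 := by
    have h3 := mul_self_le_mul_self (mul_nonneg hpos.le (norm_nonneg _)) h2
    nlinarith [h3, e1, e2]
  set x : ℝ := z.re with hxdef
  set y : ℝ := z.im with hydef
  have hure : u.re = v*x + a*(x^2-y^2) := by
    rw [hudef]
    simp only [Complex.add_re, Complex.mul_re, Complex.ofReal_re, Complex.ofReal_im, pow_two,
      Complex.mul_im, ← hxdef, ← hydef]
    ring
  have huim : u.im = v*y + 2*a*x*y := by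
    rw [hudef]
    simp only [Complex.add_im, Complex.mul_re, Complex.ofReal_re, Complex.ofReal_im, pow_two,
      Complex.mul_im, ← hxdef, ← hydef]
    ring
  have hρ : (x^2+y^2) * (1-δ/4)^2 ≤ 1 := by
    have hns : Complex.normSq z * Complex.normSq lam = 1 := by
      rw [← _root_.map_mul, mul_comm z lam, hz, _root_.map_one]
    have hnz : Complex.normSq z = x^2+y^2 := by
      rw [Complex.normSq_apply]; ring
    have hl2 : (1-δ/4)^2 ≤ Complex.normSq lam := by
      rw [← Complex.sq_norm]
      nlinarith [hcon]
    nlinarith [Complex.normSq_nonneg z]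
  have hk := key' δ v a x y hδ0 hδ1 hv0 hvδ ha0 ha8 hρ
  rw [hure, huim] at hsq
  linarith
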